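/- Let f, f̃, g, g̃, h : ℂ → ℂ be entire functions with h not identically zero. Assume that for every zero λ₀ of h, with κ denoting the order (multiplicity) of the zero of h at λ₀, one has f(λ₀) ≠ 0, f̃(λ₀) ≠ 0, and the derivatives of the pointwise quotients satisfy (g/f)^{(k)}(λ₀) = (g̃/f̃)^{(k)}(λ₀) for all 0 ≤ k ≤ κ − 1. Then there exists an entire function H : ℂ → ℂ such that f(z)·g̃(z) − g(z)·f̃(z) = h(z)·H(z) for all z ∈ ℂ. -/

import Mathlib

open Filter Topology

private lemma iteratedDeriv_eq_factorial_smul_coeff {d : ℂ → ℂ}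
    {p : FormalMultilinearSeries ℂ ℂ ℂ} {z₀ : ℂ} (hp : HasFPowerSeriesAt d p z₀) (k : ℕ) :
    iteratedDeriv k d z₀ = k.factorial • p.coeff k := by
  obtain ⟨r, hr⟩ := hp
  rw [iteratedDeriv_eq_iteratedFDeriv, ← hr.factorial_smul (1 : ℂ) k]
  rfl

private lemma pow_factor {d : ℂ → ℂ} {p : FormalMultilinearSeries ℂ ℂ ℂ} {z₀ : ℂ} (κ : ℕ)
    (hp : HasFPowerSeriesAt d p z₀) (h0 : ∀ k < κ, p.coeff k = 0) :
    ∃ w : ℂ → ℂ, AnalyticAt ℂ w z₀ ∧ ∀ᶠ z in 𝓝 z₀, d z = (z - z₀) ^ κ * w z := by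
  refine ⟨(Function.swap dslope z₀)^[κ] d,
    ⟨_, hp.has_fpower_series_iterate_dslope_fslope κ⟩, ?_⟩
  have hq := hasFPowerSeriesAt_iff'.mp (hp.has_fpower_series_iterate_dslope_fslope κ)
  filter_upwards [hq, hasFPowerSeriesAt_iff'.mp hp] with x hx1 hx2
  obtain ⟨s, hs1, hs2⟩ := hx2.exists_hasSum_smul_of_apply_eq_zero h0
  simp only [FormalMultilinearSeries.coeff_iterate_fslope] at hx1
  rw [← hs1, hx1.unique hs2]
  simp [smul_eq_mul]

/-- Let `f, f̃, g, g̃, h` be entire functions with `h` not identically zero.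
Assume that for every zero `λ₀` of `h`, with `κ` the order of the zero of `h` at `λ₀`
(i.e. `h(z) = (z - λ₀)^κ u(z)` near `λ₀` with `u` analytic at `λ₀` and `u(λ₀) ≠ 0`),
one has `f(λ₀) ≠ 0`, `f̃(λ₀) ≠ 0`, and
`(g/f)^{(k)}(λ₀) = (g̃/f̃)^{(k)}(λ₀)` for all `0 ≤ k ≤ κ - 1`.
Then there is an entire function `H` with `f·g̃ - g·f̃ = h·H`. -/
theorem statement0 (f ftil g gtil h : ℂ → ℂ)
    (hf : Differentiable ℂ f) (hftil : Differentiable ℂ ftil)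
    (hg : Differentiable ℂ g) (hgtil : Differentiable ℂ gtil)
    (hh : Differentiable ℂ h) (hne : ∃ z : ℂ, h z ≠ 0)
    (hzeros : ∀ (lam0 : ℂ) (κ : ℕ) (u : ℂ → ℂ), h lam0 = 0 →
      AnalyticAt ℂ u lam0 → u lam0 ≠ 0 →
      (∀ᶠ z in 𝓝 lam0, h z = (z - lam0) ^ κ * u z) →
      f lam0 ≠ 0 ∧ ftil lam0 ≠ 0 ∧
        ∀ k < κ, iteratedDeriv k (fun z => g z / f z) lam0 =
          iteratedDeriv k (fun z => gtil z / ftil z) lam0) :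
    ∃ H : ℂ → ℂ, Differentiable ℂ H ∧
      ∀ z : ℂ, f z * gtil z - g z * ftil z = h z * H z := by
  classical
  set F : ℂ → ℂ := fun z => f z * gtil z - g z * ftil z with hFdef
  have hFdiff : Differentiable ℂ F := (hf.mul hgtil).sub (hg.mul hftil)
  -- h is not eventually zero anywhere
  have hnev : ∀ z₀ : ℂ, ¬ ∀ᶠ z in 𝓝 z₀, h z = 0 := by
    intro z₀ hcon
    obtain ⟨z, hz⟩ := hne
    have : Set.EqOn h 0 Set.univ :=
      AnalyticOnNhd.eqOn_zero_of_preconnected_of_eventuallyEq_zero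
        (fun w _ => hh.analyticAt w) isPreconnected_univ (Set.mem_univ z₀)
        (hcon.mono fun _ hz => hz)
    exact hz (this (Set.mem_univ z))
  have hpunct : ∀ z₀ : ℂ, ∀ᶠ z in 𝓝[≠] z₀, h z ≠ 0 := fun z₀ =>
    ((hh.analyticAt z₀).eventually_eq_zero_or_eventually_ne_zero).resolve_left (hnev z₀)
  -- key local structure at each zero of h
  have key : ∀ z₀ : ℂ, h z₀ = 0 → ∃ A : ℂ → ℂ, AnalyticAt ℂ A z₀ ∧
      (∀ᶠ z in 𝓝[≠] z₀, F z / h z = A z) ∧ F z₀ = 0 := by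
    intro z₀ hz0
    have hhA : AnalyticAt ℂ h z₀ := hh.analyticAt z₀
    have hord : analyticOrderAt h z₀ ≠ ⊤ := fun hcon => hnev z₀ (analyticOrderAt_eq_top.mp hcon)
    obtain ⟨κ, hκ⟩ := WithTop.ne_top_iff_exists.mp hord
    obtain ⟨u, hu, hu0, hequ⟩ := (hhA.analyticOrderAt_eq_natCast (n := κ)).mp hκ.symm
    have hequ' : ∀ᶠ z in 𝓝 z₀, h z = (z - z₀) ^ κ * u z := by
      filter_upwards [hequ] with z hz; simpa [smul_eq_mul] using hz
    obtain ⟨hf0, hftil0, hder⟩ := hzeros z₀ κ u hz0 hu hu0 hequ'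
    have hκpos : 0 < κ := by
      rcases Nat.eq_zero_or_pos κ with h0 | h0
      · exfalso
        have hthis := hequ'.self_of_nhds
        rw [h0, pow_zero, one_mul] at hthis
        exact hu0 (hthis ▸ hz0)
      · exact h0
    -- key computations with power series of the quotients
    have hq : AnalyticAt ℂ (fun z => g z / f z) z₀ :=
      (hg.analyticAt z₀).div (hf.analyticAt z₀) hf0
    have hqt : AnalyticAt ℂ (fun z => gtil z / ftil z) z₀ :=
      (hgtil.analyticAt z₀).div (hftil.analyticAt z₀) hftil0
    obtain ⟨p2, hp2⟩ := hq
    obtain ⟨p1, hp1⟩ := hqt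
    have hpd : HasFPowerSeriesAt (fun z => gtil z / ftil z - g z / f z) (p1 - p2) z₀ :=
      hp1.sub hp2
    have hcoeff : ∀ k < κ, (p1 - p2).coeff k = 0 := by
      intro k hk
      have e1 := iteratedDeriv_eq_factorial_smul_coeff hp1 k
      have e2 := iteratedDeriv_eq_factorial_smul_coeff hp2 k
      have e3 := hder k hk
      have : (k.factorial : ℂ) * (p1 - p2).coeff k = 0 := by
        have hc : (p1 - p2).coeff k = p1.coeff k - p2.coeff k := rfl
        rw [hc, mul_sub]
        have : (k.factorial : ℂ) * p1.coeff k = (k.factorial : ℂ) * p2.coeff k := by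
          have := e3
          rw [e1, e2] at this
          simpa [nsmul_eq_mul] using this.symm
        rw [this, sub_self]
      have hkne : (k.factorial : ℂ) ≠ 0 := Nat.cast_ne_zero.mpr k.factorial_ne_zero
      exact (mul_eq_zero.mp this).resolve_left hkne
    obtain ⟨w, hw, hwe⟩ := pow_factor κ hpd hcoeff
    refine ⟨fun z => f z * ftil z * w z / u z,
      (((hf.analyticAt z₀).mul (hftil.analyticAt z₀)).mul hw).div hu hu0, ?_, ?_⟩
    · -- eventual equality on the punctured neighborhood
      have hfne : ∀ᶠ z in 𝓝 z₀, f z ≠ 0 := (hf z₀).continuousAt.eventually_ne hf0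
      have hftne : ∀ᶠ z in 𝓝 z₀, ftil z ≠ 0 := (hftil z₀).continuousAt.eventually_ne hftil0
      have hune : ∀ᶠ z in 𝓝 z₀, u z ≠ 0 := hu.continuousAt.eventually_ne hu0
      filter_upwards [hfne.filter_mono nhdsWithin_le_nhds, hftne.filter_mono nhdsWithin_le_nhds,
        hune.filter_mono nhdsWithin_le_nhds, hwe.filter_mono nhdsWithin_le_nhds,
        hequ'.filter_mono nhdsWithin_le_nhds, self_mem_nhdsWithin] with z h1 h2 h3 h4 h5 h6
      have hzz : z - z₀ ≠ 0 := sub_ne_zero.mpr h6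
      have hFz : F z = f z * ftil z * ((z - z₀) ^ κ * w z) := by
        rw [← h4, hFdef]
        field_simp
      rw [hFz, h5]
      have hpow : (z - z₀) ^ κ ≠ 0 := pow_ne_zero _ hzz
      field_simp
    · -- F z₀ = 0
      have h0 := hder 0 hκpos
      simp only [iteratedDeriv_zero] at h0
      have : g z₀ * ftil z₀ = gtil z₀ * f z₀ := (div_eq_div_iff hf0 hftil0).mp h0
      rw [hFdef]
      simp only
      linear_combination -this
  -- definition of H
  set H : ℂ → ℂ := fun z => limUnder (𝓝[≠] z) (fun w => F w / h w) with hHdef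
  have hHval : ∀ z : ℂ, h z ≠ 0 → H z = F z / h z := by
    intro z hz
    have : Filter.Tendsto (fun w => F w / h w) (𝓝[≠] z) (𝓝 (F z / h z)) :=
      (((hFdiff z).continuousAt.div (hh z).continuousAt hz).tendsto).mono_left nhdsWithin_le_nhds
    exact this.limUnder_eq
  have hHzero : ∀ z₀ : ℂ, h z₀ = 0 → ∃ A : ℂ → ℂ, AnalyticAt ℂ A z₀ ∧ H =ᶠ[𝓝 z₀] A := by
    intro z₀ hz0
    obtain ⟨A, hA, hAeq, _⟩ := key z₀ hz0
    have htA : Filter.Tendsto A (𝓝[≠] z₀) (𝓝 (A z₀)) :=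
      hA.continuousAt.tendsto.mono_left nhdsWithin_le_nhds
    have hAeq' : (fun w => F w / h w) =ᶠ[𝓝[≠] z₀] A := hAeq
    have ht : Filter.Tendsto (fun w => F w / h w) (𝓝[≠] z₀) (𝓝 (A z₀)) :=
      htA.congr' hAeq'.symm
    have hHz0 : H z₀ = A z₀ := ht.limUnder_eq
    have hev : ∀ᶠ w in 𝓝[≠] z₀, H w = A w := by
      filter_upwards [hpunct z₀, hAeq] with wpt hw1 hw2
      rw [hHval wpt hw1, hw2]
    have hev' : ∀ᶠ w in 𝓝 z₀, w ≠ z₀ → H w = A w := eventually_nhdsWithin_iff.mp hev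
    refine ⟨A, hA, ?_⟩
    filter_upwards [hev'] with wpt hw
    by_cases hwz : wpt = z₀
    · rw [hwz]; exact hHz0
    · exact hw hwz
  refine ⟨H, ?_, ?_⟩
  · intro z
    by_cases hz : h z = 0
    · obtain ⟨A, hA, hEq⟩ := hHzero z hz
      exact (hEq.differentiableAt_iff).mpr hA.differentiableAt
    · have hevn : ∀ᶠ w in 𝓝 z, h w ≠ 0 := (hh z).continuousAt.eventually_ne hz
      have hEq : H =ᶠ[𝓝 z] fun w => F w / h w := by
        filter_upwards [hevn] with w hw
        exact hHval w hw
      exact (hEq.differentiableAt_iff).mpr ((hFdiff z).div (hh z) hz)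
  · intro z
    by_cases hz : h z = 0
    · obtain ⟨A, _, _, hF0⟩ := key z hz
      show F z = h z * H z
      rw [hz, zero_mul, hF0]
    · show F z = h z * H z
      rw [hHval z hz, mul_comm, div_mul_cancel₀ _ hz]
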